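/- arXiv:1201.4448 — 4 statements merged into one kernel-verified Lean document; each statement's English description precedes it below -/
import Mathlib

section
/- Let K be a field (of arbitrary characteristic), let d ≥ 1, and let f ∈ K[[x_1,…,x_d]] be a formal power series that is symmetric (invariant under every permutation of the variables x_1,…,x_d). Set g = f·∏_{1≤i<j≤d}(x_i − x_j) and write g = Σ_r α(r) x_1^{r_1}⋯x_d^{r_d}. Then for every n ≥ 0, the homogeneous component of g of total degree n + d(d−1)/2 equals Σ_λ α(λ+δ) · a_{λ+δ}, where the sum runs over all partitions λ = (λ_1 ≥ λ_2 ≥ … ≥ λ_d ≥ 0) with λ_1+…+λ_d = n, δ = (d−1, d−2, …, 1, 0), λ+δ = (λ_1+d−1, λ_2+d−2, …, λ_d), and a_μ denotes the alternant a_μ = Σ_{σ ∈ S_d} sign(σ) · x_{σ(1)}^{μ_1} x_{σ(2)}^{μ_2} ⋯ x_{σ(d)}^{μ_d}. (Equivalently: f = Σ_λ m(λ) S_λ where S_λ is the Schur function and m(λ) = α(λ+δ); this is Berele's lemma expressing the multiplicity series of f through the coefficients of g at strictly decreasing exponents.) -/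
open MvPowerSeries

section BereleAux

variable {K : Type*} [Field K] {d : ℕ}

private lemma berele_prod_monomial {ι : Type*} (s : Finset ι) (e : ι → (Fin d →₀ ℕ)) :
    ∏ i ∈ s, (MvPowerSeries.monomial (e i) (1 : K)) =
      MvPowerSeries.monomial (∑ i ∈ s, e i) 1 := by
  classical
  induction s using Finset.cons_induction with
  | empty => simp [MvPowerSeries.monomial_zero_one]
  | cons a s ha ih =>
    rw [Finset.prod_cons, Finset.sum_cons, ih, MvPowerSeries.monomial_mul_monomial, one_mul]

private lemma berele_sum_single (σ : Equiv.Perm (Fin d)) (m : Fin d → ℕ) :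
    ∑ k : Fin d, Finsupp.single (σ k) (m k) =
      Finsupp.equivMapDomain σ (Finsupp.equivFunOnFinite.symm m) := by
  ext a
  rw [Finsupp.finset_sum_apply, Finsupp.equivMapDomain_apply]
  rw [Finset.sum_eq_single (σ.symm a)]
  · simp
  · intro b _ hb
    rw [Finsupp.single_apply, if_neg]
    exact fun h => hb (by simp [← h])
  · simp

private lemma berele_prod_X_pow (σ : Equiv.Perm (Fin d)) (m : Fin d → ℕ) :
    ∏ k : Fin d, (MvPowerSeries.X (σ k) : MvPowerSeries (Fin d) K) ^ (m k) =
      MvPowerSeries.monomial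
        (Finsupp.equivMapDomain σ (Finsupp.equivFunOnFinite.symm m)) 1 := by
  simp_rw [MvPowerSeries.X_pow_eq]
  rw [berele_prod_monomial, berele_sum_single]

private lemma berele_prod_pairs (F : Fin d → Fin d → MvPowerSeries (Fin d) K) :
    ∏ p ∈ Finset.univ.filter (fun p : Fin d × Fin d => p.1 < p.2), F p.1 p.2 =
      ∏ i : Fin d, ∏ j ∈ Finset.Ioi i, F i j := by
  rw [Finset.prod_filter]
  rw [Fintype.prod_prod_type (f := fun p : Fin d × Fin d => if p.1 < p.2 then F p.1 p.2 else 1)]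
  refine Finset.prod_congr rfl fun i _ => ?_
  rw [← Finset.prod_filter]
  congr 1
  exact Finset.filter_lt_eq_Ioi

private lemma berele_vandermonde :
    ∏ p ∈ Finset.univ.filter (fun p : Fin d × Fin d => p.1 < p.2),
      ((MvPowerSeries.X p.1 : MvPowerSeries (Fin d) K) - MvPowerSeries.X p.2) =
    ∑ τ : Equiv.Perm (Fin d), (Equiv.Perm.sign τ : ℤ) •
      ∏ k : Fin d, (MvPowerSeries.X (τ k) : MvPowerSeries (Fin d) K) ^ (d - 1 - (k : ℕ)) := by
  have h1 : ∏ p ∈ Finset.univ.filter (fun p : Fin d × Fin d => p.1 < p.2),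
      ((MvPowerSeries.X p.1 : MvPowerSeries (Fin d) K) - MvPowerSeries.X p.2) =
      ∏ p ∈ Finset.univ.filter (fun p : Fin d × Fin d => p.1 < p.2),
      ((MvPowerSeries.X p.2.rev : MvPowerSeries (Fin d) K) - MvPowerSeries.X p.1.rev) := by
    refine Finset.prod_nbij' (fun p => (p.2.rev, p.1.rev)) (fun p => (p.2.rev, p.1.rev))
      ?_ ?_ ?_ ?_ ?_
    · intro p hp; simp only [Finset.mem_filter, Finset.mem_univ, true_and] at hp ⊢
      exact Fin.rev_lt_rev.mpr hp
    · intro p hp; simp only [Finset.mem_filter, Finset.mem_univ, true_and] at hp ⊢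
      exact Fin.rev_lt_rev.mpr hp
    · intro p _; simp
    · intro p _; simp
    · intro p _; simp
  rw [h1, berele_prod_pairs (fun i j => (MvPowerSeries.X j.rev : MvPowerSeries (Fin d) K)
      - MvPowerSeries.X i.rev),
    ← Matrix.det_vandermonde (fun i : Fin d => (MvPowerSeries.X i.rev :
      MvPowerSeries (Fin d) K)), Matrix.det_apply]
  refine Finset.sum_nbij' (fun σ => Fin.revPerm.permCongr σ) (fun τ => Fin.revPerm.permCongr τ)
    (fun _ _ => Finset.mem_univ _) (fun _ _ => Finset.mem_univ _) ?_ ?_ ?_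
  · intro σ _; ext x
    simp only [Equiv.permCongr_apply, Equiv.Perm.inv_def, Fin.revPerm_symm,
      Fin.revPerm_apply, Fin.rev_rev]
  · intro τ _; ext x
    simp only [Equiv.permCongr_apply, Equiv.Perm.inv_def, Fin.revPerm_symm,
      Fin.revPerm_apply, Fin.rev_rev]
  · intro σ _
    rw [Equiv.Perm.sign_permCongr]
    congr 1
    rw [← Equiv.prod_comp Fin.revPerm
      (fun k => (MvPowerSeries.X ((Fin.revPerm.permCongr σ) k) : MvPowerSeries (Fin d) K)
        ^ (d - 1 - (k : ℕ)))]
    refine Finset.prod_congr rfl fun i _ => ?_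
    simp only [Equiv.permCongr_apply, Fin.revPerm_symm, Fin.revPerm_apply, Fin.rev_rev,
      Matrix.vandermonde_apply]
    congr 1
    rw [Fin.val_rev]
    have : (i : ℕ) < d := i.isLt
    omega

private lemma berele_emd_le_iff (e : Equiv.Perm (Fin d)) {a b : Fin d →₀ ℕ} :
    Finsupp.equivMapDomain e a ≤ Finsupp.equivMapDomain e b ↔ a ≤ b := by
  simp only [Finsupp.le_def, Finsupp.equivMapDomain_apply]
  constructor
  · intro h i; simpa using h (e i)
  · intro h i; exact h _

private lemma berele_emd_tsub (e : Equiv.Perm (Fin d)) (a b : Fin d →₀ ℕ) :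
    Finsupp.equivMapDomain e (a - b) =
      Finsupp.equivMapDomain e a - Finsupp.equivMapDomain e b := by
  ext i
  simp [Finsupp.tsub_apply, Finsupp.equivMapDomain_apply]

private lemma berele_emd_symm_emd (e : Equiv.Perm (Fin d)) (a : Fin d →₀ ℕ) :
    Finsupp.equivMapDomain e.symm (Finsupp.equivMapDomain e a) = a := by
  ext i
  simp [Finsupp.equivMapDomain_apply]

private lemma berele_emd_emd_symm (e : Equiv.Perm (Fin d)) (a : Fin d →₀ ℕ) :
    Finsupp.equivMapDomain e (Finsupp.equivMapDomain e.symm a) = a := by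
  ext i
  simp [Finsupp.equivMapDomain_apply]

noncomputable def bereleDeltaF (d : ℕ) : Fin d →₀ ℕ :=
  Finsupp.equivFunOnFinite.symm (fun k : Fin d => d - 1 - (k : ℕ))

private lemma bereleDeltaF_eq :
    (Finsupp.equivFunOnFinite.symm fun k : Fin d => d - 1 - (k : ℕ)) = bereleDeltaF d := rfl

noncomputable def bereleB (f : MvPowerSeries (Fin d) K) (s : Fin d →₀ ℕ) : K :=
  if bereleDeltaF d ≤ s then MvPowerSeries.coeff (s - bereleDeltaF d) f else 0

private lemma berele_coeff_g_expand (f g : MvPowerSeries (Fin d) K)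
    (hf : ∀ (σ : Equiv.Perm (Fin d)) (r : Fin d →₀ ℕ),
      MvPowerSeries.coeff (Finsupp.equivMapDomain σ r) f = MvPowerSeries.coeff r f)
    (hg : g = f * ∏ p ∈ Finset.univ.filter (fun p : Fin d × Fin d => p.1 < p.2),
      (MvPowerSeries.X p.1 - MvPowerSeries.X p.2))
    (r : Fin d →₀ ℕ) :
    MvPowerSeries.coeff r g = ∑ σ : Equiv.Perm (Fin d),
      (Equiv.Perm.sign σ : ℤ) • bereleB f (Finsupp.equivMapDomain σ.symm r) := by
  rw [hg, berele_vandermonde, Finset.mul_sum, map_sum]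
  refine Finset.sum_congr rfl fun σ _ => ?_
  rw [berele_prod_X_pow σ, mul_smul_comm, map_zsmul]
  simp only [bereleDeltaF_eq]
  congr 1
  rw [MvPowerSeries.coeff_mul_monomial]
  have hle : Finsupp.equivMapDomain σ (bereleDeltaF d) ≤ r ↔
      bereleDeltaF d ≤ Finsupp.equivMapDomain σ.symm r := by
    rw [← berele_emd_le_iff σ.symm, berele_emd_symm_emd]
  unfold bereleB
  by_cases h : Finsupp.equivMapDomain σ (bereleDeltaF d) ≤ r
  · rw [if_pos h, if_pos (hle.mp h), mul_one,
      ← hf σ (Finsupp.equivMapDomain σ.symm r - bereleDeltaF d)]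
    congr 1
    rw [berele_emd_tsub, berele_emd_emd_symm]
  · rw [if_neg h, if_neg fun hc => h (hle.mpr hc)]

private lemma berele_coeff_g_skew (f g : MvPowerSeries (Fin d) K)
    (hf : ∀ (σ : Equiv.Perm (Fin d)) (r : Fin d →₀ ℕ),
      MvPowerSeries.coeff (Finsupp.equivMapDomain σ r) f = MvPowerSeries.coeff r f)
    (hg : g = f * ∏ p ∈ Finset.univ.filter (fun p : Fin d × Fin d => p.1 < p.2),
      (MvPowerSeries.X p.1 - MvPowerSeries.X p.2))
    (τ : Equiv.Perm (Fin d)) (r : Fin d →₀ ℕ) :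
    MvPowerSeries.coeff (Finsupp.equivMapDomain τ r) g =
      (Equiv.Perm.sign τ : ℤ) • MvPowerSeries.coeff r g := by
  rw [berele_coeff_g_expand f g hf hg, berele_coeff_g_expand f g hf hg r, Finset.smul_sum]
  refine Finset.sum_nbij' (fun σ => σ.trans τ.symm) (fun ρ => ρ.trans τ)
    (fun _ _ => Finset.mem_univ _) (fun _ _ => Finset.mem_univ _) ?_ ?_ ?_
  · intro σ _; ext x; simp
  · intro ρ _; ext x; simp
  · intro σ _
    have harg : Finsupp.equivMapDomain (σ.trans τ.symm).symm r =
        Finsupp.equivMapDomain σ.symm (Finsupp.equivMapDomain τ r) := by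
      ext i; simp [Finsupp.equivMapDomain_apply]
    have hsign : Equiv.Perm.sign (σ.trans τ.symm) = Equiv.Perm.sign τ * Equiv.Perm.sign σ := by
      have h1 : σ.trans τ.symm = τ⁻¹ * σ := rfl
      rw [h1, map_mul, map_inv]
      simp [mul_comm]
    rw [harg, smul_smul, hsign]
    congr 1
    push_cast
    rcases Int.units_eq_one_or (Equiv.Perm.sign τ) with h | h <;>
      rcases Int.units_eq_one_or (Equiv.Perm.sign σ) with h2 | h2 <;>
      rw [h, h2] <;> norm_num

private lemma berele_coeff_g_vanish (f g : MvPowerSeries (Fin d) K)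
    (hf : ∀ (σ : Equiv.Perm (Fin d)) (r : Fin d →₀ ℕ),
      MvPowerSeries.coeff (Finsupp.equivMapDomain σ r) f = MvPowerSeries.coeff r f)
    (hg : g = f * ∏ p ∈ Finset.univ.filter (fun p : Fin d × Fin d => p.1 < p.2),
      (MvPowerSeries.X p.1 - MvPowerSeries.X p.2))
    (r : Fin d →₀ ℕ) (i j : Fin d) (hij : i ≠ j) (hrij : r i = r j) :
    MvPowerSeries.coeff r g = 0 := by
  rw [berele_coeff_g_expand f g hf hg]
  have hswap : ∀ a : Fin d, r (Equiv.swap i j a) = r a := by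
    intro a
    rcases eq_or_ne a i with rfl | hai
    · rw [Equiv.swap_apply_left, hrij]
    rcases eq_or_ne a j with rfl | haj
    · rw [Equiv.swap_apply_right, hrij]
    · rw [Equiv.swap_apply_of_ne_of_ne hai haj]
  apply Finset.sum_ninvolution (g := fun σ => σ.trans (Equiv.swap i j))
  · intro σ
    have harg : Finsupp.equivMapDomain (σ.trans (Equiv.swap i j)).symm r =
        Finsupp.equivMapDomain σ.symm r := by
      ext k
      simp only [Finsupp.equivMapDomain_apply, Equiv.symm_symm, Equiv.trans_apply]
      exact hswap (σ k)
    have hsign : Equiv.Perm.sign (σ.trans (Equiv.swap i j)) = - Equiv.Perm.sign σ := by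
      have h1 : σ.trans (Equiv.swap i j) = Equiv.swap i j * σ := rfl
      rw [h1, map_mul, Equiv.Perm.sign_swap hij]
      simp
    rw [harg, hsign]
    push_cast
    rw [neg_smul]
    exact add_neg_cancel _
  · intro σ _ hEq
    have := congrArg (fun p : Equiv.Perm (Fin d) => p (σ.symm i)) hEq
    simp only [Equiv.trans_apply, Equiv.apply_symm_apply] at this
    rw [Equiv.swap_apply_left] at this
    exact hij this.symm
  · intro σ; exact Finset.mem_univ _
  · intro σ; ext k; simp [Equiv.swap_apply_self]

private lemma berele_strictMono_gap {h : Fin d → ℕ} (hm : StrictMono h) :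
    ∀ (t : ℕ) (a b : Fin d), (b : ℕ) - (a : ℕ) = t → a ≤ b → h a + t ≤ h b := by
  intro t
  induction t with
  | zero =>
    intro a b hsub hab
    have hab' : (a : ℕ) ≤ (b : ℕ) := hab
    have : a = b := Fin.ext (by omega)
    subst this; omega
  | succ t ih =>
    intro a b hsub hab
    have hb1 : (b : ℕ) - 1 < d := by omega
    set b' : Fin d := ⟨(b : ℕ) - 1, hb1⟩ with hb'
    have h1 : a ≤ b' := by
      rw [Fin.le_def]; simp only [hb']; omega
    have h2 : (b' : ℕ) - (a : ℕ) = t := by simp only [hb']; omega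
    have h3 := ih a b' h2 h1
    have h4 : b' < b := by rw [Fin.lt_def]; simp only [hb']; omega
    have := hm h4
    omega

private lemma berele_le_apply {h : Fin d → ℕ} (hm : StrictMono h) (k : Fin d) :
    (k : ℕ) ≤ h k := by
  have hk0 : (0 : ℕ) < d := Nat.lt_of_le_of_lt (Nat.zero_le _) k.isLt
  have h0 : (⟨0, hk0⟩ : Fin d) ≤ k := by rw [Fin.le_def]; simp
  have := berele_strictMono_gap hm ((k : ℕ) - 0) ⟨0, hk0⟩ k (by simp) h0
  omega

private lemma berele_sum_delta (d : ℕ) :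
    ∑ k : Fin d, (d - 1 - (k : ℕ)) = d * (d - 1) / 2 := by
  rw [Fin.sum_univ_eq_sum_range (fun k => d - 1 - k) d,
    Finset.sum_range_reflect (fun i => i) d, Finset.sum_range_id]

end BereleAux


/-- **Berele's lemma** (Lemma 1 of the paper). Let `K` be a field of arbitrary
characteristic, `d ≥ 1`, and let `f ∈ K[[x_1,…,x_d]]` be a symmetric formal power
series.  Set `g = f · ∏_{i<j} (x_i − x_j)` and write `g = Σ_r α(r) x^r`.  Then for
every `n ≥ 0` the homogeneous component of `g` of total degree `n + d(d−1)/2`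
(expressed coefficientwise) equals `Σ_λ α(λ+δ) · a_{λ+δ}`, the sum over all
partitions `λ = (λ_1 ≥ … ≥ λ_d ≥ 0)` of `n`, where `δ = (d−1, d−2, …, 1, 0)` and
`a_μ = Σ_{σ ∈ S_d} sign(σ) x_{σ(1)}^{μ_1} ⋯ x_{σ(d)}^{μ_d}` is the alternant. -/
theorem berele_lemma (K : Type*) [Field K] (d : ℕ) (hd : 1 ≤ d)
    (f : MvPowerSeries (Fin d) K)
    (hf : ∀ (σ : Equiv.Perm (Fin d)) (r : Fin d →₀ ℕ),
      MvPowerSeries.coeff (Finsupp.equivMapDomain σ r) f = MvPowerSeries.coeff r f)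
    (g : MvPowerSeries (Fin d) K)
    (hg : g = f * ∏ p ∈ Finset.univ.filter (fun p : Fin d × Fin d => p.1 < p.2),
      (MvPowerSeries.X p.1 - MvPowerSeries.X p.2))
    (n : ℕ) (r : Fin d →₀ ℕ) (hr : ∑ i, r i = n + d * (d - 1) / 2) :
    MvPowerSeries.coeff r g =
      ∑ l ∈ (Fintype.piFinset fun _ : Fin d => Finset.range (n + 1)).filter
          (fun l : Fin d → ℕ => (∀ i j : Fin d, i ≤ j → l j ≤ l i) ∧ ∑ i, l i = n),
        (MvPowerSeries.coeff
            (Finsupp.equivFunOnFinite.symm (fun i : Fin d => l i + (d - 1 - (i : ℕ)))) g) *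
          MvPowerSeries.coeff r
            (∑ σ : Equiv.Perm (Fin d), (Equiv.Perm.sign σ : ℤ) •
              ∏ k : Fin d, MvPowerSeries.X (σ k) ^ (l k + (d - 1 - (k : ℕ)))) := by
  classical
  have alt : ∀ l : Fin d → ℕ,
      MvPowerSeries.coeff r
        (∑ σ : Equiv.Perm (Fin d), (Equiv.Perm.sign σ : ℤ) •
          ∏ k : Fin d, MvPowerSeries.X (σ k) ^ (l k + (d - 1 - (k : ℕ)))) =
      ∑ σ : Equiv.Perm (Fin d), (Equiv.Perm.sign σ : ℤ) •
        (if Finsupp.equivMapDomain σ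
            (Finsupp.equivFunOnFinite.symm (fun k : Fin d => l k + (d - 1 - (k : ℕ)))) = r
          then (1 : K) else 0) := by
    intro l
    rw [map_sum]
    refine Finset.sum_congr rfl fun σ _ => ?_
    rw [map_zsmul, berele_prod_X_pow σ (fun k : Fin d => l k + (d - 1 - (k : ℕ))),
      MvPowerSeries.coeff_monomial]
    congr 1
    exact if_congr eq_comm rfl rfl
  have hanti : ∀ l : Fin d → ℕ, (∀ i j : Fin d, i ≤ j → l j ≤ l i) →
      StrictAnti (fun k : Fin d => l k + (d - 1 - (k : ℕ))) := by
    intro l hl a b hab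
    have h1 : l b ≤ l a := hl a b hab.le
    have ha : (a : ℕ) < (b : ℕ) := hab
    have hbd : (b : ℕ) < d := b.isLt
    simp only
    omega
  by_cases hinj : Function.Injective (fun i : Fin d => r i)
  · -- r is injective
    set s : Equiv.Perm (Fin d) := Tuple.sort (fun i : Fin d => r i) with hs
    have hmono : Monotone ((fun i : Fin d => r i) ∘ s) := Tuple.monotone_sort _
    have hsm : StrictMono ((fun i : Fin d => r i) ∘ s) :=
      hmono.strictMono_of_injective (hinj.comp s.injective)
    set σ₀ : Equiv.Perm (Fin d) := Fin.revPerm.trans s with hσ₀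
    have hσ₀app : ∀ k : Fin d, σ₀ k = s (Fin.rev k) := fun k => rfl
    have hδle : ∀ k : Fin d, d - 1 - (k : ℕ) ≤ r (σ₀ k) := by
      intro k
      have h1 : ((Fin.rev k) : ℕ) ≤ ((fun i : Fin d => r i) ∘ s) (Fin.rev k) :=
        berele_le_apply hsm (Fin.rev k)
      have hv : ((Fin.rev k) : ℕ) = d - 1 - (k : ℕ) := by
        rw [Fin.val_rev]; omega
      rw [hσ₀app]
      simp only [Function.comp_apply] at h1
      omega
    set l₀ : Fin d → ℕ := fun k => r (σ₀ k) - (d - 1 - (k : ℕ)) with hl₀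
    have hl₀δ : ∀ k : Fin d, l₀ k + (d - 1 - (k : ℕ)) = r (σ₀ k) := by
      intro k; have := hδle k; simp only [hl₀]; omega
    have hemd₀ : Finsupp.equivMapDomain σ₀
        (Finsupp.equivFunOnFinite.symm (fun k : Fin d => l₀ k + (d - 1 - (k : ℕ)))) = r := by
      ext a
      rw [Finsupp.equivMapDomain_apply]
      simp only [Finsupp.equivFunOnFinite_symm_apply_apply]
      rw [hl₀δ, Equiv.apply_symm_apply]
    have hμanti : StrictAnti (fun k : Fin d => l₀ k + (d - 1 - (k : ℕ))) := by
      intro a b hab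
      simp only [hl₀δ]
      have := hsm (show Fin.rev b < Fin.rev a from Fin.rev_lt_rev.mpr hab)
      simp only [Function.comp_apply] at this
      simpa [hσ₀app] using this
    have hsumr : ∑ k : Fin d, r (σ₀ k) = n + d * (d - 1) / 2 := by
      rw [Equiv.sum_comp σ₀ (fun i : Fin d => r i)]
      exact hr
    have hsuml₀ : ∑ k, l₀ k = n := by
      have h1 : ∑ k : Fin d, (r (σ₀ k) - (d - 1 - (k : ℕ))) =
          ∑ k : Fin d, r (σ₀ k) - ∑ k : Fin d, (d - 1 - (k : ℕ)) :=
        Finset.sum_tsub_distrib _ (fun k _ => hδle k)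
      simp only [hl₀]
      rw [h1, hsumr, berele_sum_delta]
      omega
    have hl₀anti : ∀ i j : Fin d, i ≤ j → l₀ j ≤ l₀ i := by
      intro i j hij
      rcases eq_or_lt_of_le hij with rfl | hlt
      · exact le_rfl
      have hrevle : Fin.rev j ≤ Fin.rev i := Fin.rev_le_rev.mpr hij
      have hgap := berele_strictMono_gap hsm (((Fin.rev i) : ℕ) - ((Fin.rev j) : ℕ))
        (Fin.rev j) (Fin.rev i) rfl hrevle
      simp only [Function.comp_apply] at hgap
      have hvi : ((Fin.rev i) : ℕ) = d - 1 - (i : ℕ) := by rw [Fin.val_rev]; omega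
      have hvj : ((Fin.rev j) : ℕ) = d - 1 - (j : ℕ) := by rw [Fin.val_rev]; omega
      have hid : (i : ℕ) < d := i.isLt
      have hjd : (j : ℕ) < d := j.isLt
      have hlt' : (i : ℕ) < (j : ℕ) := hlt
      have hAi : r (σ₀ i) = ((fun i : Fin d => r i) ∘ s) (Fin.rev i) := by
        rw [hσ₀app]; rfl
      have hAj : r (σ₀ j) = ((fun i : Fin d => r i) ∘ s) (Fin.rev j) := by
        rw [hσ₀app]; rfl
      simp only [Function.comp_apply] at hAi hAj
      have hδlej := hδle j
      simp only [hl₀]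
      rw [hvi, hvj] at hgap
      omega
    have hl₀mem : l₀ ∈ (Fintype.piFinset fun _ : Fin d => Finset.range (n + 1)).filter
        (fun l : Fin d → ℕ => (∀ i j : Fin d, i ≤ j → l j ≤ l i) ∧ ∑ i, l i = n) := by
      rw [Finset.mem_filter]
      refine ⟨Fintype.mem_piFinset.mpr fun a => Finset.mem_range.mpr ?_, hl₀anti, hsuml₀⟩
      have h1 : l₀ a ≤ n :=
        hsuml₀ ▸ Finset.single_le_sum (fun k _ => Nat.zero_le _) (Finset.mem_univ a)
      omega
    have huniq : ∀ l : Fin d → ℕ, (∀ i j : Fin d, i ≤ j → l j ≤ l i) →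
        ∀ σ : Equiv.Perm (Fin d),
        Finsupp.equivMapDomain σ (Finsupp.equivFunOnFinite.symm
          (fun k : Fin d => l k + (d - 1 - (k : ℕ)))) = r → l = l₀ ∧ σ = σ₀ := by
      intro l hlanti σ hσeq
      have hpt : ∀ k : Fin d, l k + (d - 1 - (k : ℕ)) = r (σ k) := by
        intro k
        have := congrArg (fun v : Fin d →₀ ℕ => v (σ k)) hσeq
        simpa [Finsupp.equivMapDomain_apply,
          Finsupp.equivFunOnFinite_symm_apply_apply] using this
      have hcomp : (fun k : Fin d => l k + (d - 1 - (k : ℕ))) =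
          (fun k : Fin d => l₀ k + (d - 1 - (k : ℕ))) ∘ ⇑(σ.trans σ₀.symm) := by
        funext k
        simp only [Function.comp_apply, Equiv.trans_apply]
        rw [hpt k, hl₀δ, Equiv.apply_symm_apply]
      have hrange : Set.range (fun k : Fin d => l k + (d - 1 - (k : ℕ))) =
          Set.range (fun k : Fin d => l₀ k + (d - 1 - (k : ℕ))) := by
        rw [hcomp, Set.range_comp, Equiv.range_eq_univ, Set.image_univ]
      have hleq : (fun k : Fin d => l k + (d - 1 - (k : ℕ))) =
          (fun k : Fin d => l₀ k + (d - 1 - (k : ℕ))) :=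
        ((hanti l hlanti).range_inj hμanti).mp hrange
      have hll₀ : l = l₀ := by
        funext k
        have h2 := congrFun hleq k
        omega
      refine ⟨hll₀, ?_⟩
      have hσeq' : Finsupp.equivMapDomain σ (Finsupp.equivFunOnFinite.symm
          (fun k : Fin d => l₀ k + (d - 1 - (k : ℕ)))) = r := by
        rw [← hll₀]; exact hσeq
      have hinj2 : Function.Injective (fun k : Fin d => l₀ k + (d - 1 - (k : ℕ))) :=
        hμanti.injective
      have hsymm : ∀ a : Fin d, σ.symm a = σ₀.symm a := by
        intro a
        refine hinj2 ?_
        show l₀ (σ.symm a) + (d - 1 - ((σ.symm a : Fin d) : ℕ)) =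
          l₀ (σ₀.symm a) + (d - 1 - ((σ₀.symm a : Fin d) : ℕ))
        have h1 := congrArg (fun v : Fin d →₀ ℕ => v a) (hσeq'.trans hemd₀.symm)
        simpa [Finsupp.equivMapDomain_apply,
          Finsupp.equivFunOnFinite_symm_apply_apply] using h1
      have hsymm' : σ.symm = σ₀.symm := Equiv.ext hsymm
      have := congrArg Equiv.symm hsymm'
      simpa using this
    have hRHSeq : ∑ l ∈ (Fintype.piFinset fun _ : Fin d => Finset.range (n + 1)).filter
          (fun l : Fin d → ℕ => (∀ i j : Fin d, i ≤ j → l j ≤ l i) ∧ ∑ i, l i = n),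
        (MvPowerSeries.coeff
            (Finsupp.equivFunOnFinite.symm (fun i : Fin d => l i + (d - 1 - (i : ℕ)))) g) *
          MvPowerSeries.coeff r
            (∑ σ : Equiv.Perm (Fin d), (Equiv.Perm.sign σ : ℤ) •
              ∏ k : Fin d, MvPowerSeries.X (σ k) ^ (l k + (d - 1 - (k : ℕ)))) =
        (MvPowerSeries.coeff
            (Finsupp.equivFunOnFinite.symm (fun i : Fin d => l₀ i + (d - 1 - (i : ℕ)))) g) *
          ((Equiv.Perm.sign σ₀ : ℤ) • (1 : K)) := by
      rw [Finset.sum_eq_single l₀]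
      · rw [alt l₀]
        congr 1
        rw [Finset.sum_eq_single σ₀]
        · rw [if_pos hemd₀]
        · intro σ _ hne
          rw [if_neg, smul_zero]
          intro hc
          exact hne (huniq l₀ hl₀anti σ hc).2
        · intro habs; exact absurd (Finset.mem_univ σ₀) habs
      · intro l hl hne
        have hl' := (Finset.mem_filter.mp hl).2.1
        rw [alt l]
        rw [Finset.sum_eq_zero, mul_zero]
        intro σ _
        rw [if_neg, smul_zero]
        intro hc
        exact hne (huniq l hl' σ hc).1
      · intro habs; exact absurd hl₀mem habs
    rw [hRHSeq, ← hemd₀, berele_coeff_g_skew f g hf hg σ₀, mul_smul_comm, mul_one]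
  · -- r is not injective
    obtain ⟨a, b, hab, hne⟩ := Function.not_injective_iff.mp hinj
    rw [berele_coeff_g_vanish f g hf hg r a b hne hab]
    symm
    apply Finset.sum_eq_zero
    intro l hl
    have hl' := (Finset.mem_filter.mp hl).2.1
    rw [alt l, Finset.sum_eq_zero, mul_zero]
    intro σ _
    rw [if_neg, smul_zero]
    intro hc
    have hpt : ∀ x : Fin d, l (σ.symm x) + (d - 1 - ((σ.symm x : Fin d) : ℕ)) = r x := by
      intro x
      have := congrArg (fun v : Fin d →₀ ℕ => v x) hc
      simpa [Finsupp.equivMapDomain_apply,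
        Finsupp.equivFunOnFinite_symm_apply_apply] using this
    have hinj2 : Function.Injective (fun k : Fin d => l k + (d - 1 - (k : ℕ))) :=
      (hanti l hl').injective
    have h1 : σ.symm a = σ.symm b := hinj2 (by
      show l (σ.symm a) + (d - 1 - ((σ.symm a : Fin d) : ℕ)) =
        l (σ.symm b) + (d - 1 - ((σ.symm b : Fin d) : ℕ))
      rw [hpt a, hpt b]
      exact hab)
    exact hne (σ.symm.injective h1)
end

section
/- In the field ℚ(x_1,x_2) of rational functions in two variables over ℚ, the following identity holds: (x_1 − x_2)·1/((1−x_1^3)(1−x_1^2x_2)(1−x_1x_2^2)(1−x_2^3)) = x_1·h(x_1, x_1x_2) − x_2·h(x_2, x_1x_2), where h(v_1,v_2) = (1 − v_1v_2 + v_1^2v_2^2)/((1−v_1^3)(1−v_1v_2)(1−v_2^6)). (This expresses that h is the multiplicity series M' of the Hilbert series of the symmetric algebra K[W(3)] of the irreducible GL_2-module W(3), i.e., of ∏_{a+b=3}(1−x_1^a x_2^b)^{-1}.) -/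
/-- The candidate multiplicity series `M'(H(K[W(3)]); v₁, v₂)`. -/
noncomputable def multSeriesW3 (v1 v2 : FractionRing (MvPolynomial (Fin 2) ℚ)) :
    FractionRing (MvPolynomial (Fin 2) ℚ) :=
  (1 - v1 * v2 + v1 ^ 2 * v2 ^ 2) / ((1 - v1 ^ 3) * (1 - v1 * v2) * (1 - v2 ^ 6))

lemma algebraMap_ne_zero_of_constantCoeff (p : MvPolynomial (Fin 2) ℚ)
    (hp : MvPolynomial.constantCoeff p ≠ 0) :
    algebraMap (MvPolynomial (Fin 2) ℚ) (FractionRing (MvPolynomial (Fin 2) ℚ)) p ≠ 0 := by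
  intro h
  have : p ≠ 0 := fun h0 => hp (by simp [h0])
  exact this ((map_eq_zero_iff _ (IsFractionRing.injective _ _)).mp h)

/-- In `ℚ(x₁,x₂)` one has
`(x₁ − x₂)/((1−x₁³)(1−x₁²x₂)(1−x₁x₂²)(1−x₂³)) = x₁·h(x₁,x₁x₂) − x₂·h(x₂,x₁x₂)`
with `h(v₁,v₂) = (1 − v₁v₂ + v₁²v₂²)/((1−v₁³)(1−v₁v₂)(1−v₂⁶))`, i.e. `h` is the
multiplicity series of the Hilbert series of the symmetric algebra `K[W(3)]`. -/
theorem multiplicity_series_KW3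
    (x1 x2 : FractionRing (MvPolynomial (Fin 2) ℚ))
    (hx1 : x1 = algebraMap (MvPolynomial (Fin 2) ℚ) _ (MvPolynomial.X 0))
    (hx2 : x2 = algebraMap (MvPolynomial (Fin 2) ℚ) _ (MvPolynomial.X 1)) :
    (x1 - x2) *
        (1 / ((1 - x1 ^ 3) * (1 - x1 ^ 2 * x2) * (1 - x1 * x2 ^ 2) * (1 - x2 ^ 3))) =
      x1 * multSeriesW3 x1 (x1 * x2) - x2 * multSeriesW3 x2 (x1 * x2) := by
  have key : ∀ p : MvPolynomial (Fin 2) ℚ, MvPolynomial.constantCoeff p = 0 →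
      (1 : FractionRing (MvPolynomial (Fin 2) ℚ)) - algebraMap _ _ p ≠ 0 := by
    intro p hp
    have := algebraMap_ne_zero_of_constantCoeff (1 - p) (by simp [hp])
    simpa using this
  subst hx1 hx2
  set f := algebraMap (MvPolynomial (Fin 2) ℚ) (FractionRing (MvPolynomial (Fin 2) ℚ))
  have h1 : (1 : FractionRing (MvPolynomial (Fin 2) ℚ)) - f (MvPolynomial.X 0) ^ 3 ≠ 0 := by
    rw [← map_pow]; exact key _ (by simp)
  have h2 : (1 : FractionRing (MvPolynomial (Fin 2) ℚ)) - f (MvPolynomial.X 0) ^ 2 * f (MvPolynomial.X 1) ≠ 0 := by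
    rw [← map_pow, ← map_mul]; exact key _ (by simp)
  have h3 : (1 : FractionRing (MvPolynomial (Fin 2) ℚ)) - f (MvPolynomial.X 0) * f (MvPolynomial.X 1) ^ 2 ≠ 0 := by
    rw [← map_pow, ← map_mul]; exact key _ (by simp)
  have h4 : (1 : FractionRing (MvPolynomial (Fin 2) ℚ)) - f (MvPolynomial.X 1) ^ 3 ≠ 0 := by
    rw [← map_pow]; exact key _ (by simp)
  have h5 : (1 : FractionRing (MvPolynomial (Fin 2) ℚ)) - f (MvPolynomial.X 0) * (f (MvPolynomial.X 0) * f (MvPolynomial.X 1)) ≠ 0 := by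
    rw [← map_mul, ← map_mul]; exact key _ (by simp)
  have h6 : (1 : FractionRing (MvPolynomial (Fin 2) ℚ)) - (f (MvPolynomial.X 0) * f (MvPolynomial.X 1)) ^ 6 ≠ 0 := by
    rw [← map_mul, ← map_pow]; exact key _ (by simp)
  have h7 : (1 : FractionRing (MvPolynomial (Fin 2) ℚ)) - f (MvPolynomial.X 1) * (f (MvPolynomial.X 0) * f (MvPolynomial.X 1)) ≠ 0 := by
    rw [← map_mul, ← map_mul]; exact key _ (by simp)
  unfold multSeriesW3
  field_simp
  ring_nf
  have h8 : (1 : FractionRing (MvPolynomial (Fin 2) ℚ)) - f (MvPolynomial.X 0) ^ 6 * f (MvPolynomial.X 1) ^ 6 ≠ 0 := by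
    rw [← mul_pow]; exact h6
  field_simp
  ring
end

section
/- Let d ≥ 1 and let SL_d(ℚ) act on the space Sym_d(ℚ) of symmetric d×d rational matrices by A ↦ g^T A g, with the induced action (g·F)(A) = F(g^T A g) on the polynomial algebra ℚ[a_{ij} : 1 ≤ i ≤ j ≤ d] of polynomial functions on Sym_d(ℚ). Then for every n ≥ 0, the ℚ-vector space of homogeneous polynomial functions F of degree n satisfying F(g^T A g) = F(A) for all g ∈ SL_d(ℚ) has dimension 1 if d divides n, and dimension 0 otherwise. Equivalently, the Hilbert series of the algebra of SL_d-invariants of the symmetric algebra K[W(2)] of the space of quadratic forms in d variables equals 1/(1 − t^d). -/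
open Matrix

/-- Index set for the entries `a_{ij}`, `1 ≤ i ≤ j ≤ d`, of a symmetric matrix. -/
abbrev SymIdx (d : ℕ) : Type := {p : Fin d × Fin d // p.1 ≤ p.2}

namespace SLdInvAux

open MvPolynomial

variable {d : ℕ}

/-- The symmetric matrix built from upper-triangular entries. -/
def symMat {R : Type*} (v : SymIdx d → R) : Matrix (Fin d) (Fin d) R :=
  Matrix.of fun i j => if h : i ≤ j then v ⟨(i, j), h⟩ else v ⟨(j, i), le_of_not_ge h⟩

/-- Upper-triangular entries of a matrix. -/
def ent {R : Type*} (A : Matrix (Fin d) (Fin d) R) : SymIdx d → R := fun p => A p.1.1 p.1.2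

lemma ent_symMat {R : Type*} (v : SymIdx d → R) : ent (symMat v) = v := by
  funext p
  simp only [ent, symMat, Matrix.of_apply, dif_pos p.2]

lemma isSymm_symMat {R : Type*} (v : SymIdx d → R) : (symMat v).IsSymm := by
  unfold Matrix.IsSymm
  ext i j
  simp only [transpose_apply, symMat, Matrix.of_apply]
  by_cases h : i ≤ j
  · by_cases h' : j ≤ i
    · have : i = j := le_antisymm h h'
      subst this
      simp
    · rw [dif_neg h', dif_pos h]
  · rw [dif_pos (le_of_not_ge h), dif_neg h]

lemma symMat_ent {R : Type*} {A : Matrix (Fin d) (Fin d) R} (hA : A.IsSymm) :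
    symMat (ent A) = A := by
  ext i j
  simp only [symMat, ent, Matrix.of_apply]
  by_cases h : i ≤ j
  · rw [dif_pos h]
  · rw [dif_neg h]
    exact hA.apply j i ▸ rfl

lemma map_symMat {R S : Type*} (f : R → S) (v : SymIdx d → R) :
    (symMat v).map f = symMat (f ∘ v) := by
  ext i j
  simp only [Matrix.map_apply, symMat, Matrix.of_apply]
  split_ifs <;> rfl

/-- The assignment corresponding to a diagonal matrix. -/
def diagAssign {R : Type*} [Zero R] (x : Fin d → R) : SymIdx d → R :=
  fun p => if p.1.1 = p.1.2 then x p.1.1 else 0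

lemma symMat_diagAssign {R : Type*} [Zero R] (x : Fin d → R) :
    symMat (diagAssign x) = Matrix.diagonal x := by
  ext i j
  simp only [symMat, diagAssign, Matrix.of_apply, Matrix.diagonal_apply]
  by_cases h : i ≤ j
  · rw [dif_pos h]
  · rw [dif_neg h]
    have hne : ¬ i = j := fun e => h (le_of_eq e)
    have hne' : ¬ j = i := fun e => hne e.symm
    rw [if_neg hne', if_neg hne]

lemma ent_diagonal {R : Type*} [Zero R] (x : Fin d → R) :
    ent (Matrix.diagonal x) = diagAssign x := by
  funext p
  simp [ent, diagAssign, Matrix.diagonal_apply]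

/-- eval-aeval composition. -/
lemma eval_aeval {σ τ : Type*} (x : τ → ℚ) (g : σ → MvPolynomial τ ℚ)
    (p : MvPolynomial σ ℚ) :
    eval x (aeval g p) = eval (fun s => eval x (g s)) p := by
  rw [aeval_def, eval_eval₂]
  have h : ((eval x).comp (algebraMap ℚ (MvPolynomial τ ℚ))) = RingHom.id ℚ := by
    ext r
    simp [algebraMap_eq]
  rw [h, eval₂_id]

lemma aeval_eq_eval (v : SymIdx d → ℚ) (p : MvPolynomial (SymIdx d) ℚ) :
    aeval v p = eval v p := by
  rw [← coe_aeval_eq_eval]; rfl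

/-- coefficient of a variable-rescaled polynomial. -/
lemma coeff_aeval_scale {σ : Type*} [Fintype σ] [DecidableEq σ] (c : σ → ℚ)
    (q : MvPolynomial σ ℚ) (α : σ →₀ ℕ) :
    coeff α (aeval (fun i => C (c i) * X i) q) = (∏ i, c i ^ α i) * coeff α q := by
  rw [aeval_def, eval₂_eq' (algebraMap ℚ (MvPolynomial σ ℚ)) _ q]
  have hterm : ∀ β : σ →₀ ℕ,
      (algebraMap ℚ (MvPolynomial σ ℚ)) (coeff β q) * ∏ i, (C (c i) * X i) ^ β i
        = C (coeff β q * ∏ i, c i ^ β i) * monomial β (1 : ℚ) := by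
    intro β
    have : ∏ i, (C (c i) * X i) ^ β i
        = C (∏ i, c i ^ β i) * ∏ i, (X i : MvPolynomial σ ℚ) ^ β i := by
      rw [map_prod]
      rw [← Finset.prod_mul_distrib]
      refine Finset.prod_congr rfl fun i _ => ?_
      rw [mul_pow, map_pow]
    rw [this]
    have hx : ∏ i, (X i : MvPolynomial σ ℚ) ^ β i = monomial β (1 : ℚ) := by
      rw [← prod_X_pow_eq_monomial]
      exact (Finset.prod_subset (Finset.subset_univ β.support)
        (fun i _ hi => by
          simp [Finsupp.notMem_support_iff.mp hi])).symm
    rw [hx, algebraMap_eq, C_mul, ← mul_assoc]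
  calc coeff α (∑ β ∈ q.support,
        (algebraMap ℚ (MvPolynomial σ ℚ)) (coeff β q) * ∏ i, (C (c i) * X i) ^ β i)
      = ∑ β ∈ q.support, coeff α (C (coeff β q * ∏ i, c i ^ β i) * monomial β (1 : ℚ)) := by
        rw [coeff_sum]
        exact Finset.sum_congr rfl fun β _ => by rw [hterm]
    _ = ∑ β ∈ q.support, if β = α then coeff β q * ∏ i, c i ^ β i else 0 := by
        refine Finset.sum_congr rfl fun β _ => ?_
        rw [coeff_C_mul, coeff_monomial]
        split_ifs <;> simp
    _ = (∏ i, c i ^ α i) * coeff α q := by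
        rw [Finset.sum_ite_eq' q.support α (fun β => coeff β q * ∏ i, c i ^ β i)]
        by_cases h : α ∈ q.support
        · rw [if_pos h, mul_comm]
        · rw [if_neg h, MvPolynomial.notMem_support_iff.mp h, mul_zero]

/-- Every symmetric rational matrix is `SL`-congruent to a diagonal matrix. -/
lemma exists_SL_diag (hd : 1 ≤ d) (A : Matrix (Fin d) (Fin d) ℚ) (hA : A.IsSymm) :
    ∃ g : Matrix.SpecialLinearGroup (Fin d) ℚ, ∃ x : Fin d → ℚ,
      (g : Matrix (Fin d) (Fin d) ℚ)ᵀ * A * (g : Matrix (Fin d) (Fin d) ℚ)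
        = Matrix.diagonal x := by
  classical
  set B : LinearMap.BilinForm ℚ (Fin d → ℚ) := Matrix.toLinearMap₂' ℚ A with hB
  have happ : ∀ x y : Fin d → ℚ, B x y = ∑ i, ∑ j, x i * y j * A i j := by
    intro x y
    rw [hB, Matrix.toLinearMap₂'_apply]
    refine Finset.sum_congr rfl fun i _ => Finset.sum_congr rfl fun j _ => ?_
    simp [smul_eq_mul]; ring
  have hBsymm : LinearMap.IsSymm B := by
    refine LinearMap.isSymm_def.mpr ?_
    intro x y
    simp only [RingHom.id_apply]
    rw [happ, happ, Finset.sum_comm]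
    refine Finset.sum_congr rfl fun i _ => Finset.sum_congr rfl fun j _ => ?_
    rw [hA.apply j i]
    ring
  obtain ⟨b0, hb0⟩ := LinearMap.BilinForm.exists_orthogonal_basis hBsymm
  have hrank : Module.finrank ℚ (Fin d → ℚ) = d := Module.finrank_fin_fun ℚ
  let b : Module.Basis (Fin d) ℚ (Fin d → ℚ) := b0.reindex (finCongr hrank)
  have hb : ∀ i j : Fin d, i ≠ j → B (b i) (b j) = 0 := by
    intro i j hij
    have : (finCongr hrank).symm i ≠ (finCongr hrank).symm j :=
      fun h => hij (by simpa using congrArg (finCongr hrank) h)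
    simpa [b, Module.Basis.reindex_apply] using hb0 this
  let P : Matrix (Fin d) (Fin d) ℚ := Matrix.of fun i j => b j i
  have hPAP : ∀ i j, (Pᵀ * A * P) i j = B (b i) (b j) := by
    intro i j
    rw [happ]
    simp only [Matrix.mul_apply, Matrix.transpose_apply, Finset.sum_mul, Finset.mul_sum, P,
      Matrix.of_apply]
    rw [Finset.sum_comm]
    refine Finset.sum_congr rfl fun k _ => Finset.sum_congr rfl fun l _ => ?_
    ring
  have hPdiag : Pᵀ * A * P = Matrix.diagonal (fun i => B (b i) (b i)) := by
    ext i j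
    rw [hPAP, Matrix.diagonal_apply]
    by_cases h : i = j
    · subst h; rw [if_pos rfl]
    · rw [if_neg h, hb i j h]
  have hPtm : (Pi.basisFun ℚ (Fin d)).toMatrix b = P := by
    ext i j
    simp [Module.Basis.toMatrix_apply, P]
  have : Invertible P := by
    rw [← hPtm]
    exact (Pi.basisFun ℚ (Fin d)).invertibleToMatrix b
  have hdet : P.det ≠ 0 := by
    have := Matrix.isUnit_iff_isUnit_det P |>.mp (isUnit_of_invertible P)
    exact IsUnit.ne_zero this
  set i0 : Fin d := ⟨0, hd⟩
  set e : Fin d → ℚ := fun k => if k = i0 then (P.det)⁻¹ else 1 with he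
  set E : Matrix (Fin d) (Fin d) ℚ := Matrix.diagonal e with hE
  have hdetE : E.det = (P.det)⁻¹ := by
    rw [hE, Matrix.det_diagonal]
    rw [Finset.prod_eq_single i0 (fun k _ hk => by simp [he, hk])
      (fun h => absurd (Finset.mem_univ i0) h)]
    simp [he]
  refine ⟨⟨P * E, ?_⟩, fun i => e i * (B (b i) (b i) * e i), ?_⟩
  · rw [Matrix.det_mul, hdetE, mul_inv_cancel₀ hdet]
  · show (P * E)ᵀ * A * (P * E) = _
    rw [Matrix.transpose_mul]
    have hEt : Eᵀ = E := by rw [hE, Matrix.diagonal_transpose]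
    rw [hEt]
    calc E * Pᵀ * A * (P * E) = E * (Pᵀ * A * P) * E := by
          simp only [Matrix.mul_assoc]
      _ = E * Matrix.diagonal (fun i => B (b i) (b i)) * E := by rw [hPdiag]
      _ = Matrix.diagonal fun i => e i * (B (b i) (b i) * e i) := by
          rw [hE, Matrix.diagonal_mul_diagonal, Matrix.diagonal_mul_diagonal]
          ext i j
          by_cases h : i = j
          · subst h
            simp only [Matrix.diagonal_apply_eq]
            show e i * (B (b i)) (b i) * e i = e i * ((B (b i)) (b i) * e i)
            ring
          · rw [Matrix.diagonal_apply_ne _ h, Matrix.diagonal_apply_ne _ h]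

lemma isHomogeneous_zsmul {σ : Type*} {p : MvPolynomial σ ℚ} {k : ℕ} (z : ℤ)
    (h : p.IsHomogeneous k) : (z • p).IsHomogeneous k := by
  intro δ hδ
  refine h ?_
  intro h0
  exact hδ (by rw [coeff_smul, h0, smul_zero])

lemma isHomogeneous_det_symMat_X :
    (Matrix.det (symMat (fun p : SymIdx d => (X p : MvPolynomial (SymIdx d) ℚ)))).IsHomogeneous d := by
  classical
  rw [Matrix.det_apply]
  apply MvPolynomial.IsHomogeneous.sum
  intro σ _
  rw [Units.smul_def]
  apply isHomogeneous_zsmul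
  have hp := MvPolynomial.IsHomogeneous.prod Finset.univ
    (fun i => symMat (fun p : SymIdx d => (X p : MvPolynomial (SymIdx d) ℚ)) (σ i) i)
    (fun _ => 1) (fun i _ => by
      show (symMat (fun p : SymIdx d => (X p : MvPolynomial (SymIdx d) ℚ)) (σ i) i).IsHomogeneous 1
      unfold symMat
      rw [Matrix.of_apply]
      split_ifs <;> exact MvPolynomial.isHomogeneous_X _ _)
  simpa using hp

lemma aeval_det_symMat_X (v : SymIdx d → ℚ) :
    aeval v (Matrix.det (symMat (fun p : SymIdx d => (X p : MvPolynomial (SymIdx d) ℚ))))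
      = (symMat v).det := by
  have h := RingHom.map_det
    ((aeval v : MvPolynomial (SymIdx d) ℚ →ₐ[ℚ] ℚ) : MvPolynomial (SymIdx d) ℚ →+* ℚ)
    (symMat (fun p : SymIdx d => (X p : MvPolynomial (SymIdx d) ℚ)))
  rw [show ((aeval v : MvPolynomial (SymIdx d) ℚ →ₐ[ℚ] ℚ) : MvPolynomial (SymIdx d) ℚ →+* ℚ)
      (Matrix.det (symMat (fun p : SymIdx d => (X p : MvPolynomial (SymIdx d) ℚ))))
      = aeval v (Matrix.det (symMat (fun p : SymIdx d => (X p : MvPolynomial (SymIdx d) ℚ))))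
      from rfl] at h
  rw [RingHom.mapMatrix_apply] at h
  rw [h, map_symMat]
  congr 1
  ext i j
  by_cases hij : i ≤ j <;> simp [symMat, hij]

end SLdInvAux

open MvPolynomial SLdInvAux

set_option maxHeartbeats 1000000
set_option synthInstance.maxHeartbeats 200000

/-- **`SL_d`-invariants of quadratic forms.**  Let `SL_d(ℚ)` act on symmetric
`d×d` matrices by `A ↦ gᵀAg`, inducing an action on the polynomial algebra
`ℚ[a_{ij} : i ≤ j]` of polynomial functions on symmetric matrices.  Then for
every `n ≥ 0` the space of homogeneous degree-`n` invariant polynomial functions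
has dimension `1` if `d ∣ n` and `0` otherwise; equivalently the Hilbert series
of `K[W(2)]^{SL_d}` is `1/(1 − t^d)`. -/
theorem hilbert_series_SLd_invariants_quadratic_forms (d : ℕ) (hd : 1 ≤ d) (n : ℕ) :
    Module.finrank ℚ
      ↥(MvPolynomial.homogeneousSubmodule (SymIdx d) ℚ n ⊓
        ⨅ (g : Matrix.SpecialLinearGroup (Fin d) ℚ)
          (A : Matrix (Fin d) (Fin d) ℚ) (_ : A.IsSymm),
          LinearMap.ker
            ((MvPolynomial.aeval (fun p : SymIdx d =>
                ((g : Matrix (Fin d) (Fin d) ℚ)ᵀ * A * (g : Matrix (Fin d) (Fin d) ℚ))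
                  p.1.1 p.1.2)).toLinearMap -
              (MvPolynomial.aeval (fun p : SymIdx d =>
                A p.1.1 p.1.2)).toLinearMap)) =
      if d ∣ n then 1 else 0 := by
  classical
  set Dsub : SymIdx d → MvPolynomial (Fin d) ℚ :=
    fun p => if p.1.1 = p.1.2 then X p.1.1 else 0 with hDsub
  set Inv : Submodule ℚ (MvPolynomial (SymIdx d) ℚ) :=
    ⨅ (g : Matrix.SpecialLinearGroup (Fin d) ℚ)
      (A : Matrix (Fin d) (Fin d) ℚ) (_ : A.IsSymm),
      LinearMap.ker
        ((MvPolynomial.aeval (fun p : SymIdx d =>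
            ((g : Matrix (Fin d) (Fin d) ℚ)ᵀ * A * (g : Matrix (Fin d) (Fin d) ℚ))
              p.1.1 p.1.2)).toLinearMap -
          (MvPolynomial.aeval (fun p : SymIdx d =>
            A p.1.1 p.1.2)).toLinearMap) with hInvDef
  have hmemInv : ∀ F : MvPolynomial (SymIdx d) ℚ, F ∈ Inv ↔
      ∀ (g : Matrix.SpecialLinearGroup (Fin d) ℚ) (A : Matrix (Fin d) (Fin d) ℚ),
        A.IsSymm →
          eval (ent ((g : Matrix (Fin d) (Fin d) ℚ)ᵀ * A * (g : Matrix (Fin d) (Fin d) ℚ))) F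
            = eval (ent A) F := by
    intro F
    rw [hInvDef]
    simp only [Submodule.mem_iInf, LinearMap.mem_ker, LinearMap.sub_apply,
      AlgHom.toLinearMap_apply, sub_eq_zero]
    constructor
    · intro h g A hA
      have h1 := h g A hA
      rw [aeval_eq_eval, aeval_eq_eval] at h1
      exact h1
    · intro h g A hA
      have h1 := h g A hA
      rw [aeval_eq_eval, aeval_eq_eval]
      exact h1
  have h_eval_q : ∀ (F : MvPolynomial (SymIdx d) ℚ) (x : Fin d → ℚ),
      eval x (aeval Dsub F) = eval (diagAssign x) F := by
    intro F x
    rw [eval_aeval]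
    have harg : (fun s => eval x (Dsub s)) = diagAssign x := by
      funext p
      simp [hDsub, diagAssign, apply_ite (eval x)]
    rw [harg]
  have h_zero : ∀ F ∈ Inv, aeval Dsub F = 0 → F = 0 := by
    intro F hF hq
    apply MvPolynomial.funext (q := 0)
    intro v
    rw [map_zero]
    obtain ⟨g, x, hg⟩ := exists_SL_diag hd (symMat v) (isSymm_symMat v)
    have h1 := (hmemInv F).mp hF g (symMat v) (isSymm_symMat v)
    rw [hg, ent_symMat] at h1
    rw [← h1, ent_diagonal, ← h_eval_q, hq, map_zero]
  have h_qhom : ∀ F ∈ homogeneousSubmodule (SymIdx d) ℚ n,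
      (aeval Dsub F).IsHomogeneous n := by
    intro F hF
    have hg : ∀ p : SymIdx d, (Dsub p).IsHomogeneous 1 := by
      intro p
      rw [hDsub]
      dsimp only
      split_ifs
      · exact isHomogeneous_X _ _
      · exact isHomogeneous_zero _ _ _
    have h2 := MvPolynomial.IsHomogeneous.aeval ((mem_homogeneousSubmodule n F).mp hF) Dsub hg
    simpa using h2
  have h_deg : ∀ (F : MvPolynomial (SymIdx d) ℚ), F ∈ homogeneousSubmodule (SymIdx d) ℚ n →
      ∀ α : Fin d →₀ ℕ, coeff α (aeval Dsub F) ≠ 0 → ∑ k, α k = n := by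
    intro F hF α hα
    have h1 := h_qhom F hF hα
    have h2 : α.degree = n := by
      rw [Finsupp.degree_eq_weight_one]
      exact h1
    rw [← h2, Finsupp.degree]
    exact (Finset.sum_subset (Finset.subset_univ _)
      (fun k _ hk => Finsupp.notMem_support_iff.mp hk)).symm
  have h_const : ∀ F ∈ Inv, ∀ α : Fin d →₀ ℕ, coeff α (aeval Dsub F) ≠ 0 →
      ∀ i j : Fin d, α i = α j := by
    intro F hF α hα i j
    by_cases hij : i = j
    · rw [hij]
    set t : Fin d → ℚ := fun k => if k = i then 2 else if k = j then 2⁻¹ else 1 with ht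
    have hti : t i = 2 := by simp [ht]
    have htj : t j = 2⁻¹ := by
      rw [ht]
      dsimp only
      rw [if_neg (fun h => hij h.symm), if_pos rfl]
    have hjmem : j ∈ Finset.univ.erase i :=
      Finset.mem_erase.mpr ⟨fun h => hij h.symm, Finset.mem_univ j⟩
    have hprod : ∏ k, t k = 1 := by
      rw [← Finset.mul_prod_erase Finset.univ t (Finset.mem_univ i), hti]
      rw [← Finset.mul_prod_erase _ t hjmem, htj]
      rw [Finset.prod_eq_one]
      · norm_num
      · intro k hk
        rw [Finset.mem_erase, Finset.mem_erase] at hk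
        rw [ht]
        dsimp only
        rw [if_neg hk.2.1, if_neg hk.1]
    set g : Matrix.SpecialLinearGroup (Fin d) ℚ :=
      ⟨Matrix.diagonal t, by rw [Matrix.det_diagonal]; exact hprod⟩ with hgdef
    have hfun : ∀ x : Fin d → ℚ,
        eval (fun k => t k ^ 2 * x k) (aeval Dsub F) = eval x (aeval Dsub F) := by
      intro x
      have h1 := (hmemInv F).mp hF g (Matrix.diagonal x) (Matrix.isSymm_diagonal x)
      have hgAg : (g : Matrix (Fin d) (Fin d) ℚ)ᵀ * Matrix.diagonal x
          * (g : Matrix (Fin d) (Fin d) ℚ) = Matrix.diagonal (fun k => t k ^ 2 * x k) := by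
        show (Matrix.diagonal t)ᵀ * Matrix.diagonal x * Matrix.diagonal t = _
        rw [Matrix.diagonal_transpose, Matrix.diagonal_mul_diagonal,
          Matrix.diagonal_mul_diagonal]
        exact congrArg Matrix.diagonal (funext fun k => by
          show t k * x k * t k = t k ^ 2 * x k
          ring)
      rw [hgAg, ent_diagonal, ent_diagonal] at h1
      rw [h_eval_q, h_eval_q]
      exact h1
    have hpoly : aeval (fun k => C (t k ^ 2) * X k) (aeval Dsub F) = aeval Dsub F := by
      apply MvPolynomial.funext
      intro x
      rw [eval_aeval]
      have hfn : (fun s => eval x (C (t s ^ 2) * X s)) = fun k => t k ^ 2 * x k := by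
        funext s; simp
      rw [hfn, hfun x]
    have hc := coeff_aeval_scale (fun k => t k ^ 2) (aeval Dsub F) α
    rw [hpoly] at hc
    have hone : (∏ k, (t k ^ 2) ^ α k) = 1 :=
      mul_right_cancel₀ hα (hc.symm.trans (one_mul _).symm)
    have hcomp : (∏ k, (t k ^ 2) ^ α k) = 2 ^ (2 * α i) * ((2:ℚ) ^ (2 * α j))⁻¹ := by
      rw [← Finset.mul_prod_erase Finset.univ _ (Finset.mem_univ i)]
      rw [← Finset.mul_prod_erase _ _ hjmem]
      rw [Finset.prod_eq_one (fun k hk => ?_)]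
      · rw [hti, htj, mul_one, ← pow_mul, ← pow_mul, inv_pow]
      · rw [Finset.mem_erase, Finset.mem_erase] at hk
        rw [ht]
        dsimp only
        rw [if_neg hk.2.1, if_neg hk.1, one_pow, one_pow]
    rw [hcomp] at hone
    have hne2 : ((2:ℚ) ^ (2 * α j)) ≠ 0 := pow_ne_zero _ two_ne_zero
    have heq : (2:ℚ) ^ (2 * α i) = 2 ^ (2 * α j) := by
      rwa [mul_inv_eq_one₀ hne2] at hone
    have hmono : StrictMono (fun k : ℕ => (2:ℚ) ^ k) :=
      fun a b h => pow_lt_pow_right₀ one_lt_two h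
    have := hmono.injective heq
    exact Nat.eq_of_mul_eq_mul_left (by norm_num) this
  by_cases hdvd : d ∣ n
  · obtain ⟨m, hm⟩ := hdvd
    set cm : Fin d →₀ ℕ := Finsupp.equivFunOnFinite.symm (fun _ => m) with hcm
    have hcmk : ∀ k : Fin d, cm k = m := fun k => rfl
    set i0 : Fin d := ⟨0, hd⟩ with hi0
    have h_shape : ∀ F, F ∈ MvPolynomial.homogeneousSubmodule (SymIdx d) ℚ n ⊓ Inv →
        ∀ α : Fin d →₀ ℕ, coeff α (aeval Dsub F) ≠ 0 → α = cm := by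
      intro F hF α hα
      have hconst := h_const F hF.2 α hα
      have hsum := h_deg F hF.1 α hα
      have hsum2 : ∑ k : Fin d, α k = d * α i0 := by
        rw [Finset.sum_congr rfl (fun k _ => hconst k i0)]
        simp [Finset.card_univ, mul_comm]
      have hmm : d * α i0 = d * m := by rw [← hsum2, hsum, hm]
      have hαi0 : α i0 = m := Nat.eq_of_mul_eq_mul_left (lt_of_lt_of_le zero_lt_one hd) hmm
      ext k
      rw [hconst k i0, hαi0, hcmk]
    set S := MvPolynomial.homogeneousSubmodule (SymIdx d) ℚ n ⊓ Inv with hS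
    set L : S →ₗ[ℚ] ℚ :=
      (lcoeff ℚ cm) ∘ₗ (aeval Dsub).toLinearMap ∘ₗ S.subtype with hL
    have hLapp : ∀ x : S, L x = coeff cm (aeval Dsub (x : MvPolynomial (SymIdx d) ℚ)) := by
      intro x
      rfl
    have hLinj : Function.Injective L := by
      rw [← LinearMap.ker_eq_bot, LinearMap.ker_eq_bot']
      intro x hx
      obtain ⟨F, hF⟩ := x
      have hx' : coeff cm (aeval Dsub F) = 0 := by rw [← hLapp ⟨F, hF⟩]; exact hx
      have hq0 : aeval Dsub F = 0 := by
        apply MvPolynomial.ext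
        intro α
        rw [coeff_zero]
        by_contra hne
        have hα := h_shape F hF α hne
        rw [hα] at hne
        exact hne hx'
      exact Subtype.ext (h_zero F hF.2 hq0)
    have hfd : FiniteDimensional ℚ S := FiniteDimensional.of_injective L hLinj
    have hle : Module.finrank ℚ S ≤ 1 := by
      have h2 := LinearMap.finrank_le_finrank_of_injective hLinj
      simpa using h2
    set F0 : MvPolynomial (SymIdx d) ℚ :=
      (Matrix.det (symMat (fun p : SymIdx d => (X p : MvPolynomial (SymIdx d) ℚ))))^m with hF0
    have hF0hom : F0 ∈ MvPolynomial.homogeneousSubmodule (SymIdx d) ℚ n := by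
      rw [mem_homogeneousSubmodule, hF0]
      have hh := (isHomogeneous_det_symMat_X (d := d)).pow m
      rwa [← hm] at hh
    have hF0inv : F0 ∈ Inv := by
      apply (hmemInv F0).mpr
      intro g A hA
      have hsy : ((g : Matrix (Fin d) (Fin d) ℚ)ᵀ * A * (g : Matrix (Fin d) (Fin d) ℚ)).IsSymm := by
        unfold Matrix.IsSymm
        rw [Matrix.transpose_mul, Matrix.transpose_mul, Matrix.transpose_transpose, hA,
          Matrix.mul_assoc]
      have e1 : eval (ent ((g : Matrix (Fin d) (Fin d) ℚ)ᵀ * A * (g : Matrix (Fin d) (Fin d) ℚ))) F0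
          = ((((g : Matrix (Fin d) (Fin d) ℚ)ᵀ * A * (g : Matrix (Fin d) (Fin d) ℚ))).det)^m := by
        rw [hF0, ← SLdInvAux.aeval_eq_eval, map_pow, aeval_det_symMat_X, symMat_ent hsy]
      have e2 : eval (ent A) F0 = (A.det)^m := by
        rw [hF0, ← SLdInvAux.aeval_eq_eval, map_pow, aeval_det_symMat_X, symMat_ent hA]
      rw [e1, e2]
      congr 1
      rw [Matrix.det_mul, Matrix.det_mul, Matrix.det_transpose, g.prop]
      ring
    have hF0ne : F0 ≠ 0 := by
      intro h0
      have h1 : eval (diagAssign (fun _ => (1:ℚ))) F0 = 1 := by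
        rw [hF0, ← SLdInvAux.aeval_eq_eval, map_pow, aeval_det_symMat_X, symMat_diagAssign,
          Matrix.det_diagonal]
        simp
      rw [h0, map_zero] at h1
      exact zero_ne_one h1
    have hmem : F0 ∈ S := ⟨hF0hom, hF0inv⟩
    have hnt : Nontrivial S := ⟨⟨⟨F0, hmem⟩, 0, fun h => hF0ne (congrArg Subtype.val h)⟩⟩
    have hge : 1 ≤ Module.finrank ℚ S := Module.finrank_pos_iff.mpr hnt
    rw [if_pos ⟨m, hm⟩]
    exact le_antisymm hle hge
  · rw [if_neg hdvd]
    have hbot : MvPolynomial.homogeneousSubmodule (SymIdx d) ℚ n ⊓ Inv = ⊥ := by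
      rw [Submodule.eq_bot_iff]
      intro F hF
      have hq0 : aeval Dsub F = 0 := by
        apply MvPolynomial.ext
        intro α
        rw [coeff_zero]
        by_contra hne
        have hconst := h_const F hF.2 α hne
        have hsum := h_deg F hF.1 α hne
        set i0 : Fin d := ⟨0, hd⟩ with hi0
        have hsum2 : ∑ k : Fin d, α k = d * α i0 := by
          rw [Finset.sum_congr rfl (fun k _ => hconst k i0)]
          simp [Finset.card_univ, mul_comm]
        exact hdvd ⟨α i0, by rw [← hsum, hsum2]⟩
      exact h_zero F hF.2 hq0
    rw [hbot]
    exact finrank_bot ℚ _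
end

section
/- In the field ℚ(x_1,x_2,x_3) of rational functions in three variables over ℚ, the following identity holds: (x_1−x_2)(x_1−x_3)(x_2−x_3) · ( 2·∏_{i=1}^3 (1−x_i)^{-1} + (x_1+x_2+x_3 − 1)·∏_{i=1}^3 (1−x_i)^{-2} ) = Σ_{σ∈S_3} sign(σ) · x_{σ(1)}^2 x_{σ(2)} · h(x_{σ(1)}, x_{σ(1)}x_{σ(2)}, x_{σ(1)}x_{σ(2)}x_{σ(3)}), where h(v_1,v_2,v_3) = 1/(1−v_1) + (v_2 + v_3)/((1−v_1)^2(1−v_2)). (This expresses that h is the multiplicity series M' of the Hilbert series of the relatively free algebra F(U_2(K)) of the algebra of 2×2 upper triangular matrices, and yields the multiplicities m_λ(U_2(K)) = 1 for λ=(λ_1), m_λ = λ_1−λ_2+1 for λ=(λ_1,λ_2) with λ_2>0 and for λ=(λ_1,λ_2,1), and 0 otherwise, in the cocharacter sequence of U_2(K).) -/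
namespace StmtU2K

noncomputable abbrev F3 : Type := FractionRing (MvPolynomial (Fin 3) ℚ)

/-- The candidate multiplicity series `M'(H(F(U₂(K))); v₁, v₂, v₃)` of the Hilbert
series of the relatively free algebra of the `2×2` upper triangular matrices. -/
noncomputable def h (v1 v2 v3 : F3) : F3 :=
  1 / (1 - v1) + (v2 + v3) / ((1 - v1) ^ 2 * (1 - v2))

set_option maxHeartbeats 4000000 in
/-- In `ℚ(x₁,x₂,x₃)`:
`(x₁−x₂)(x₁−x₃)(x₂−x₃)·(2·∏(1−xᵢ)⁻¹ + (x₁+x₂+x₃−1)·∏(1−xᵢ)⁻²) =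
  Σ_{σ∈S₃} sign(σ)·x_{σ(1)}²x_{σ(2)}·h(x_{σ(1)}, x_{σ(1)}x_{σ(2)}, x_{σ(1)}x_{σ(2)}x_{σ(3)})`,
where `h(v₁,v₂,v₃) = 1/(1−v₁) + (v₂+v₃)/((1−v₁)²(1−v₂))`; that is, `h` is the
multiplicity series of the Hilbert series of the relatively free algebra
`F(U₂(K))`, giving the multiplicities of the cocharacter sequence of `U₂(K)`. -/
theorem multiplicity_series_FU2K
    (x : Fin 3 → F3)
    (hx : ∀ i, x i = algebraMap (MvPolynomial (Fin 3) ℚ) F3 (MvPolynomial.X i)) :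
    (x 0 - x 1) * (x 0 - x 2) * (x 1 - x 2) *
        (2 * ((1 - x 0) * (1 - x 1) * (1 - x 2))⁻¹ +
          (x 0 + x 1 + x 2 - 1) * ((1 - x 0) ^ 2 * (1 - x 1) ^ 2 * (1 - x 2) ^ 2)⁻¹) =
      ∑ σ : Equiv.Perm (Fin 3), (Equiv.Perm.sign σ : ℤ) •
        (x (σ 0) ^ 2 * x (σ 1) *
          h (x (σ 0)) (x (σ 0) * x (σ 1)) (x (σ 0) * x (σ 1) * x (σ 2))) := by
  have inj : Function.Injective (algebraMap (MvPolynomial (Fin 3) ℚ) F3) :=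
    IsFractionRing.injective _ _
  have key : ∀ p : MvPolynomial (Fin 3) ℚ, MvPolynomial.constantCoeff p = 0 →
      (1 : F3) - algebraMap (MvPolynomial (Fin 3) ℚ) F3 p ≠ 0 := by
    intro p hp hq
    rw [sub_eq_zero, ← map_one (algebraMap (MvPolynomial (Fin 3) ℚ) F3)] at hq
    have := inj hq
    rw [← this] at hp
    simp at hp
  have h1 : ∀ a : Fin 3, (1 : F3) - x a ≠ 0 := by
    intro a; rw [hx a]; exact key _ (by simp)
  have h2 : ∀ a b : Fin 3, (1 : F3) - x a * x b ≠ 0 := by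
    intro a b; rw [hx a, hx b, ← map_mul]; exact key _ (by simp)
  have hcomb : ∀ v1 v2 v3 : F3, 1 - v1 ≠ 0 → 1 - v2 ≠ 0 →
      h v1 v2 v3 = ((1 - v1) * (1 - v2) + v2 + v3) / ((1 - v1) ^ 2 * (1 - v2)) := by
    intro v1 v2 v3 hv1 hv2
    rw [h]
    field_simp
    ring
  set Dr : F3 := (1 - x 0) ^ 2 * (1 - x 1) ^ 2 * (1 - x 2) ^ 2 *
      (1 - x 0 * x 1) * (1 - x 0 * x 2) * (1 - x 1 * x 2) with hDrdef
  have hDr : Dr ≠ 0 := by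
    rw [hDrdef]
    exact mul_ne_zero (mul_ne_zero (mul_ne_zero (mul_ne_zero (mul_ne_zero
      (pow_ne_zero _ (h1 0)) (pow_ne_zero _ (h1 1))) (pow_ne_zero _ (h1 2)))
      (h2 0 1)) (h2 0 2)) (h2 1 2)
  have hQ : ∀ a b : Fin 3, (1 - x a) ^ 2 * (1 - x a * x b) ≠ 0 := fun a b =>
    mul_ne_zero (pow_ne_zero _ (h1 a)) (h2 a b)
  have e1 : x 0 ^ 2 * x 1 * h (x 0) (x 0 * x 1) (x 0 * x 1 * x 2) =
      (x 0 ^ 2 * x 1 * ((1 - x 0) * (1 - x 0 * x 1) + x 0 * x 1 + x 0 * x 1 * x 2) *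
        ((1 - x 1) ^ 2 * (1 - x 2) ^ 2 * (1 - x 0 * x 2) * (1 - x 1 * x 2))) / Dr := by
    rw [hcomb _ _ _ (h1 0) (h2 0 1), mul_div_assoc', div_eq_div_iff (hQ 0 1) hDr, hDrdef]
    ring
  have e2 : x 1 ^ 2 * x 0 * h (x 1) (x 1 * x 0) (x 1 * x 0 * x 2) =
      (x 1 ^ 2 * x 0 * ((1 - x 1) * (1 - x 1 * x 0) + x 1 * x 0 + x 1 * x 0 * x 2) *
        ((1 - x 0) ^ 2 * (1 - x 2) ^ 2 * (1 - x 0 * x 2) * (1 - x 1 * x 2))) / Dr := by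
    rw [hcomb _ _ _ (h1 1) (h2 1 0), mul_div_assoc', div_eq_div_iff (hQ 1 0) hDr, hDrdef]
    ring
  have e3 : x 2 ^ 2 * x 1 * h (x 2) (x 2 * x 1) (x 2 * x 1 * x 0) =
      (x 2 ^ 2 * x 1 * ((1 - x 2) * (1 - x 2 * x 1) + x 2 * x 1 + x 2 * x 1 * x 0) *
        ((1 - x 0) ^ 2 * (1 - x 1) ^ 2 * (1 - x 0 * x 1) * (1 - x 0 * x 2))) / Dr := by
    rw [hcomb _ _ _ (h1 2) (h2 2 1), mul_div_assoc', div_eq_div_iff (hQ 2 1) hDr, hDrdef]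
    ring
  have e4 : x 0 ^ 2 * x 2 * h (x 0) (x 0 * x 2) (x 0 * x 2 * x 1) =
      (x 0 ^ 2 * x 2 * ((1 - x 0) * (1 - x 0 * x 2) + x 0 * x 2 + x 0 * x 2 * x 1) *
        ((1 - x 1) ^ 2 * (1 - x 2) ^ 2 * (1 - x 0 * x 1) * (1 - x 1 * x 2))) / Dr := by
    rw [hcomb _ _ _ (h1 0) (h2 0 2), mul_div_assoc', div_eq_div_iff (hQ 0 2) hDr, hDrdef]
    ring
  have e5 : x 1 ^ 2 * x 2 * h (x 1) (x 1 * x 2) (x 1 * x 2 * x 0) =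
      (x 1 ^ 2 * x 2 * ((1 - x 1) * (1 - x 1 * x 2) + x 1 * x 2 + x 1 * x 2 * x 0) *
        ((1 - x 0) ^ 2 * (1 - x 2) ^ 2 * (1 - x 0 * x 1) * (1 - x 0 * x 2))) / Dr := by
    rw [hcomb _ _ _ (h1 1) (h2 1 2), mul_div_assoc', div_eq_div_iff (hQ 1 2) hDr, hDrdef]
    ring
  have e6 : x 2 ^ 2 * x 0 * h (x 2) (x 2 * x 0) (x 2 * x 0 * x 1) =
      (x 2 ^ 2 * x 0 * ((1 - x 2) * (1 - x 2 * x 0) + x 2 * x 0 + x 2 * x 0 * x 1) *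
        ((1 - x 0) ^ 2 * (1 - x 1) ^ 2 * (1 - x 0 * x 1) * (1 - x 1 * x 2))) / Dr := by
    rw [hcomb _ _ _ (h1 2) (h2 2 0), mul_div_assoc', div_eq_div_iff (hQ 2 0) hDr, hDrdef]
    ring
  have huniv : (Finset.univ : Finset (Equiv.Perm (Fin 3))) =
      {1, Equiv.swap 0 1, Equiv.swap 0 2, Equiv.swap 1 2,
       Equiv.swap 0 1 * Equiv.swap 1 2, Equiv.swap 1 2 * Equiv.swap 0 1} := by decide
  rw [huniv, Finset.sum_insert (by decide), Finset.sum_insert (by decide),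
    Finset.sum_insert (by decide), Finset.sum_insert (by decide),
    Finset.sum_insert (by decide), Finset.sum_singleton]
  have s01 : (Equiv.Perm.sign (Equiv.swap (0:Fin 3) 1) : ℤ) = -1 := by decide
  have s02 : (Equiv.Perm.sign (Equiv.swap (0:Fin 3) 2) : ℤ) = -1 := by decide
  have s12 : (Equiv.Perm.sign (Equiv.swap (1:Fin 3) 2) : ℤ) = -1 := by decide
  have sA : (Equiv.Perm.sign (Equiv.swap (0:Fin 3) 1 * Equiv.swap 1 2) : ℤ) = 1 := by decide
  have sB : (Equiv.Perm.sign (Equiv.swap (1:Fin 3) 2 * Equiv.swap 0 1) : ℤ) = 1 := by decide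
  simp only [map_one, Units.val_one, Int.cast_one, one_smul, s01, s02, s12, sA, sB,
    Equiv.Perm.one_apply, Equiv.Perm.mul_apply,
    show (Equiv.swap (0:Fin 3) 1) 0 = 1 from by decide,
    show (Equiv.swap (0:Fin 3) 1) 1 = 0 from by decide,
    show (Equiv.swap (0:Fin 3) 1) 2 = 2 from by decide,
    show (Equiv.swap (0:Fin 3) 2) 0 = 2 from by decide,
    show (Equiv.swap (0:Fin 3) 2) 1 = 1 from by decide,
    show (Equiv.swap (0:Fin 3) 2) 2 = 0 from by decide,
    show (Equiv.swap (1:Fin 3) 2) 0 = 0 from by decide,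
    show (Equiv.swap (1:Fin 3) 2) 1 = 2 from by decide,
    show (Equiv.swap (1:Fin 3) 2) 2 = 1 from by decide,
    neg_smul, one_smul]
  rw [e1, e2, e3, e4, e5, e6]
  have hP2 : (1 - x 0) ^ 2 * (1 - x 1) ^ 2 * (1 - x 2) ^ 2 ≠ (0 : F3) :=
    mul_ne_zero (mul_ne_zero (pow_ne_zero _ (h1 0)) (pow_ne_zero _ (h1 1)))
      (pow_ne_zero _ (h1 2))
  have LHSe : (2 : F3) * ((1 - x 0) * (1 - x 1) * (1 - x 2))⁻¹ +
        (x 0 + x 1 + x 2 - 1) * ((1 - x 0) ^ 2 * (1 - x 1) ^ 2 * (1 - x 2) ^ 2)⁻¹ =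
      (2 * ((1 - x 0) * (1 - x 1) * (1 - x 2)) + (x 0 + x 1 + x 2 - 1)) /
        ((1 - x 0) ^ 2 * (1 - x 1) ^ 2 * (1 - x 2) ^ 2) := by
    rw [eq_div_iff hP2]
    have hP : (1 - x 0) * (1 - x 1) * (1 - x 2) ≠ (0 : F3) :=
      mul_ne_zero (mul_ne_zero (h1 0) (h1 1)) (h1 2)
    have hA := mul_inv_cancel₀ hP
    rw [show (1 - x 0) ^ 2 * (1 - x 1) ^ 2 * (1 - x 2) ^ 2 =
      ((1 - x 0) * (1 - x 1) * (1 - x 2)) * ((1 - x 0) * (1 - x 1) * (1 - x 2)) by ring]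
    generalize (1 - x 0) * (1 - x 1) * (1 - x 2) = A at hA ⊢
    rw [mul_inv]
    generalize x 0 + x 1 + x 2 - 1 = B
    linear_combination (2 * A + B * (A * A⁻¹ + 1)) * hA
  rw [LHSe]
  simp only [one_zsmul, ← neg_div, ← add_div]
  rw [mul_div_assoc', div_eq_div_iff hP2 hDr, hDrdef]
  ring

end StmtU2K
end
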